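/- arXiv:2101.05527 — 4 statements merged into one kernel-verified Lean document; each statement's English description precedes it below -/
import Mathlib

section
/- For every c > 0 there exists a constant C > 0 such that for all λ ≥ 1 and all x ∈ ℝ² with |x| ≥ c one has |π(λx) − p* − (2x₁/(λ|x|²), 2x₂/(λ|x|²), 0)| ≤ C λ⁻², and moreover the total derivative in x of the remainder satisfies ‖D_x[π(λx)] − D_x[(2x₁/(λ|x|²), 2x₂/(λ|x|²), 0)]‖ ≤ C λ⁻². -/
open MeasureTheory Real

noncomputable section

abbrev E2 := EuclideanSpace ℝ (Fin 2)
abbrev E3 := EuclideanSpace ℝ (Fin 3)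

/-- The inverse stereographic projection `π : ℝ² → ℝ³` from the north pole. -/
def stereo (x : E2) : E3 :=
  (WithLp.equiv 2 (Fin 3 → ℝ)).symm
    ![2 * x 0 / (1 + ‖x‖ ^ 2), 2 * x 1 / (1 + ‖x‖ ^ 2), (‖x‖ ^ 2 - 1) / (1 + ‖x‖ ^ 2)]

/-- The north pole `p* = (0,0,1)`. -/
def pStar : E3 := (WithLp.equiv 2 (Fin 3 → ℝ)).symm ![0, 0, 1]

/-- The leading order correction `(2x₁/(λ|x|²), 2x₂/(λ|x|²), 0)`. -/
def tail (l : ℝ) (x : E2) : E3 :=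
  (WithLp.equiv 2 (Fin 3 → ℝ)).symm
    ![2 * x 0 / (l * ‖x‖ ^ 2), 2 * x 1 / (l * ‖x‖ ^ 2), 0]

lemma coord_le_norm (x : E2) (i : Fin 2) : |x i| ≤ ‖x‖ := by
  rw [EuclideanSpace.norm_eq, ← Real.sqrt_sq_eq_abs]
  apply Real.sqrt_le_sqrt
  rw [Fin.sum_univ_two]
  fin_cases i <;> simp [Real.norm_eq_abs, sq_abs] <;> nlinarith [sq_nonneg (x 0), sq_nonneg (x 1)]

lemma e3_norm_le (w : E3) : ‖w‖ ≤ |w 0| + |w 1| + |w 2| := by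
  rw [EuclideanSpace.norm_eq, Fin.sum_univ_three]
  rw [show |w 0| + |w 1| + |w 2| = Real.sqrt ((|w 0| + |w 1| + |w 2|)^2) by
    rw [Real.sqrt_sq (by positivity)]]
  apply Real.sqrt_le_sqrt
  simp only [Real.norm_eq_abs, sq_abs]
  nlinarith [abs_nonneg (w 0), abs_nonneg (w 1), abs_nonneg (w 2), sq_abs (w 0), sq_abs (w 1),
    sq_abs (w 2), mul_nonneg (abs_nonneg (w 0)) (abs_nonneg (w 1)),
    mul_nonneg (abs_nonneg (w 0)) (abs_nonneg (w 2)),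
    mul_nonneg (abs_nonneg (w 1)) (abs_nonneg (w 2))]

lemma abs_div_le_div {X N D : ℝ} (hD : 0 < D) (h : |X| ≤ N) : |X / D| ≤ N / D := by
  rw [abs_div, abs_of_pos hD]
  gcongr

lemma pow_aux {c l r : ℝ} (hc : 0 < c) (hl : 1 ≤ l) (hr : c ≤ r) (n : ℕ) :
    l ^ 2 * c ^ n ≤ l ^ 3 * r ^ n := by
  have hr0 : 0 < r := hc.trans_le hr
  have hl0 : 0 < l := by linarith
  have hcn : c ^ n ≤ r ^ n := pow_le_pow_left₀ hc.le hr n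
  have e1 : l ^ 2 * c ^ n ≤ l ^ 2 * r ^ n := mul_le_mul_of_nonneg_left hcn (by positivity)
  have h23 : l ^ 2 ≤ l ^ 3 := by nlinarith
  have e2 : l ^ 2 * r ^ n ≤ l ^ 3 * r ^ n := mul_le_mul_of_nonneg_right h23 (by positivity)
  linarith

lemma auxv0 (c l r x0 : ℝ) (hc : 0 < c) (hl : 1 ≤ l) (hr : c ≤ r) (hx0 : |x0| ≤ r) :
    |(-2) * x0 / (l * r ^ 2 * (1 + l ^ 2 * r ^ 2))| ≤ 2 / c ^ 3 / l ^ 2 := by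
  have hr0 : 0 < r := hc.trans_le hr
  have hl0 : 0 < l := by linarith
  have h1 : |(-2) * x0| ≤ 2 * r := by
    rw [abs_mul]; norm_num; linarith
  have hkey := pow_aux hc hl hr 3
  calc |(-2) * x0 / (l * r ^ 2 * (1 + l ^ 2 * r ^ 2))|
      ≤ 2 * r / (l * r ^ 2 * (1 + l ^ 2 * r ^ 2)) := abs_div_le_div (by positivity) h1
    _ = 2 / (r * l * (1 + l ^ 2 * r ^ 2)) := by field_simp
    _ ≤ 2 / (l ^ 2 * c ^ 3) := by
        gcongr 2 / ?_
        nlinarith [mul_pos hl0 hr0, mul_pos (mul_pos hr0 hl0) (mul_pos hl0 hl0)]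
    _ = 2 / c ^ 3 / l ^ 2 := by ring

lemma auxv2 (c l r : ℝ) (hc : 0 < c) (hl : 1 ≤ l) (hr : c ≤ r) :
    |(-2) / (1 + l ^ 2 * r ^ 2)| ≤ 2 / c ^ 2 / l ^ 2 := by
  have hr0 : 0 < r := hc.trans_le hr
  have hl0 : 0 < l := by linarith
  have hc2 : c ^ 2 ≤ r ^ 2 := pow_le_pow_left₀ hc.le hr 2
  calc |(-2) / (1 + l ^ 2 * r ^ 2)|
      ≤ 2 / (1 + l ^ 2 * r ^ 2) := abs_div_le_div (by positivity) (by norm_num)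
    _ ≤ 2 / (l ^ 2 * c ^ 2) := by
        gcongr 2 / ?_
        nlinarith [sq_nonneg l]
    _ = 2 / c ^ 2 / l ^ 2 := by ring

lemma aux0 (c l r x0 a b V : ℝ) (hc : 0 < c) (hl : 1 ≤ l) (hr : c ≤ r) (hx0 : |x0| ≤ r)
    (ha : |a| ≤ V) (hb : |b| ≤ r * V) (hV : 0 ≤ V) :
    |(-2) * a / (l * r ^ 2 * (1 + l ^ 2 * r ^ 2)) +
      4 * x0 * b * (1 + 2 * l ^ 2 * r ^ 2) / (l * r ^ 4 * (1 + l ^ 2 * r ^ 2) ^ 2)| ≤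
      10 / c ^ 4 / l ^ 2 * V := by
  have hr0 : 0 < r := hc.trans_le hr
  have hl0 : 0 < l := by linarith
  have hkey := pow_aux hc hl hr 4
  have h1 : |(-2) * a| ≤ 2 * V := by rw [abs_mul]; norm_num; linarith
  have h2 : |4 * x0 * b * (1 + 2 * l ^ 2 * r ^ 2)| ≤
      4 * r * (r * V) * (2 * (1 + l ^ 2 * r ^ 2)) := by
    rw [abs_mul, abs_mul, abs_mul]
    have e4 : |(4:ℝ)| = 4 := by norm_num
    rw [e4, abs_of_pos (show (0:ℝ) < 1 + 2 * l ^ 2 * r ^ 2 by positivity)]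
    have hbb : (0:ℝ) ≤ |b| := abs_nonneg b
    have hxx : (0:ℝ) ≤ |x0| := abs_nonneg x0
    nlinarith [mul_le_mul hx0 hb hbb (by linarith : (0:ℝ) ≤ r), sq_nonneg l, sq_nonneg r,
      mul_nonneg (mul_nonneg hr0.le (mul_nonneg hr0.le hV)) (sq_nonneg (l*r))]
  calc |(-2) * a / (l * r ^ 2 * (1 + l ^ 2 * r ^ 2)) +
      4 * x0 * b * (1 + 2 * l ^ 2 * r ^ 2) / (l * r ^ 4 * (1 + l ^ 2 * r ^ 2) ^ 2)|
      ≤ |(-2) * a / (l * r ^ 2 * (1 + l ^ 2 * r ^ 2))| +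
        |4 * x0 * b * (1 + 2 * l ^ 2 * r ^ 2) / (l * r ^ 4 * (1 + l ^ 2 * r ^ 2) ^ 2)| :=
        abs_add_le _ _
    _ ≤ 2 * V / (l * r ^ 2 * (1 + l ^ 2 * r ^ 2)) +
        4 * r * (r * V) * (2 * (1 + l ^ 2 * r ^ 2)) / (l * r ^ 4 * (1 + l ^ 2 * r ^ 2) ^ 2) := by
        gcongr ?_ + ?_
        · exact abs_div_le_div (by positivity) h1
        · exact abs_div_le_div (by positivity) h2
    _ = 2 * V / (l * r ^ 2 * (1 + l ^ 2 * r ^ 2)) +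
        8 * V / (l * r ^ 2 * (1 + l ^ 2 * r ^ 2)) := by
        field_simp; ring
    _ = 10 * V / (l * r ^ 2 * (1 + l ^ 2 * r ^ 2)) := by ring
    _ ≤ 10 * V / (l ^ 2 * c ^ 4) := by
        gcongr 10 * V / ?_
        nlinarith [mul_pos hl0 (mul_pos hr0 hr0)]
    _ = 10 / c ^ 4 / l ^ 2 * V := by ring

lemma aux2 (c l r b V : ℝ) (hc : 0 < c) (hl : 1 ≤ l) (hr : c ≤ r)
    (hb : |b| ≤ r * V) (hV : 0 ≤ V) :
    |4 * l ^ 2 * b / (1 + l ^ 2 * r ^ 2) ^ 2| ≤ 4 / c ^ 3 / l ^ 2 * V := by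
  have hr0 : 0 < r := hc.trans_le hr
  have hl0 : 0 < l := by linarith
  have h1 : |4 * l ^ 2 * b| ≤ 4 * l ^ 2 * (r * V) := by
    rw [abs_mul, abs_mul]
    have e4 : |(4:ℝ)| = 4 := by norm_num
    rw [e4, abs_of_nonneg (by positivity : (0:ℝ) ≤ l ^ 2)]
    nlinarith [abs_nonneg b, sq_nonneg l]
  have hc3 : c ^ 3 ≤ r ^ 3 := pow_le_pow_left₀ hc.le hr 3
  calc |4 * l ^ 2 * b / (1 + l ^ 2 * r ^ 2) ^ 2|
      ≤ 4 * l ^ 2 * (r * V) / (1 + l ^ 2 * r ^ 2) ^ 2 := abs_div_le_div (by positivity) h1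
    _ ≤ 4 * l ^ 2 * (r * V) / (l ^ 2 * r ^ 2) ^ 2 := by
        gcongr
        nlinarith
    _ = 4 * V / (l ^ 2 * r ^ 3) := by field_simp
    _ ≤ 4 * V / (l ^ 2 * c ^ 3) := by
        gcongr 4 * V / ?_
        nlinarith [sq_nonneg l]
    _ = 4 / c ^ 3 / l ^ 2 * V := by ring

set_option maxHeartbeats 2000000 in
/-- For every `c > 0` there is `C > 0` so that for all `λ ≥ 1` and `|x| ≥ c` one has
`|π(λx) − p* − (2x/(λ|x|²),0)| ≤ Cλ⁻²`, and the same bound for the total derivative in `x`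
of the remainder. -/
theorem stmt0 :
    ∀ c : ℝ, 0 < c → ∃ C : ℝ, 0 < C ∧ ∀ l : ℝ, 1 ≤ l → ∀ x : E2, c ≤ ‖x‖ →
      ‖stereo (l • x) - pStar - tail l x‖ ≤ C / l ^ 2 ∧
      ‖fderiv ℝ (fun y => stereo (l • y)) x - fderiv ℝ (tail l) x‖ ≤ C / l ^ 2 := by
  intro c hc
  refine ⟨30 / c ^ 4 + 30 / c ^ 3 + 30 / c ^ 2, by positivity, ?_⟩
  intro l hl x hx
  have hl0 : 0 < l := by linarith
  have hr0 : 0 < ‖x‖ := lt_of_lt_of_le hc hx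
  have hux : (1 + l ^ 2 * ‖x‖ ^ 2) ≠ 0 := by positivity
  have htx : (l * ‖x‖ ^ 2) ≠ 0 := by positivity
  constructor
  · -- value bound
    have h0 : (stereo (l • x) - pStar - tail l x) 0 =
        (-2) * x 0 / (l * ‖x‖ ^ 2 * (1 + l ^ 2 * ‖x‖ ^ 2)) := by
      simp [stereo, pStar, tail, norm_smul, abs_of_pos hl0, mul_pow]
      field_simp
      ring
    have h1 : (stereo (l • x) - pStar - tail l x) 1 =
        (-2) * x 1 / (l * ‖x‖ ^ 2 * (1 + l ^ 2 * ‖x‖ ^ 2)) := by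
      simp [stereo, pStar, tail, norm_smul, abs_of_pos hl0, mul_pow]
      field_simp
      ring
    have h2 : (stereo (l • x) - pStar - tail l x) 2 = (-2) / (1 + l ^ 2 * ‖x‖ ^ 2) := by
      simp [stereo, pStar, tail, norm_smul, abs_of_pos hl0, mul_pow]
      field_simp
      ring
    calc ‖stereo (l • x) - pStar - tail l x‖
        ≤ |(stereo (l • x) - pStar - tail l x) 0| + |(stereo (l • x) - pStar - tail l x) 1| +
          |(stereo (l • x) - pStar - tail l x) 2| := e3_norm_le _
      _ ≤ 2 / c ^ 3 / l ^ 2 + 2 / c ^ 3 / l ^ 2 + 2 / c ^ 2 / l ^ 2 := by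
          rw [h0, h1, h2]
          gcongr ?_ + ?_ + ?_
          · exact auxv0 c l ‖x‖ (x 0) hc hl hx (coord_le_norm x 0)
          · exact auxv0 c l ‖x‖ (x 1) hc hl hx (coord_le_norm x 1)
          · exact auxv2 c l ‖x‖ hc hl hx
      _ = (2 / c ^ 3 + 2 / c ^ 3 + 2 / c ^ 2) / l ^ 2 := by ring
      _ ≤ (30 / c ^ 4 + 30 / c ^ 3 + 30 / c ^ 2) / l ^ 2 := by
          gcongr ?_ / l ^ 2
          have h4 : (0:ℝ) < 30 / c ^ 4 := by positivity
          have h3 : 2 / c ^ 3 + 2 / c ^ 3 ≤ 30 / c ^ 3 := by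
            rw [← add_div]; gcongr; norm_num
          have h2' : 2 / c ^ 2 ≤ 30 / c ^ 2 := by gcongr; norm_num
          linarith
  · -- derivative bound
    have hQ : HasFDerivAt (fun y : E2 => ‖y‖ ^ 2) (2 • (innerSL ℝ x)) x :=
      (hasStrictFDerivAt_norm_sq x).hasFDerivAt
    set Q : E2 →L[ℝ] ℝ := 2 • (innerSL ℝ x) with hQdef
    set P0 : E2 →L[ℝ] ℝ := EuclideanSpace.proj (0 : Fin 2) with hP0def
    set P1 : E2 →L[ℝ] ℝ := EuclideanSpace.proj (1 : Fin 2) with hP1def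
    have hP0 : HasFDerivAt (fun y : E2 => y 0) P0 x := by
      simpa using (EuclideanSpace.proj (0 : Fin 2) : E2 →L[ℝ] ℝ).hasFDerivAt
    have hP1 : HasFDerivAt (fun y : E2 => y 1) P1 x := by
      simpa using (EuclideanSpace.proj (1 : Fin 2) : E2 →L[ℝ] ℝ).hasFDerivAt
    have hu : HasFDerivAt (fun y : E2 => 1 + l ^ 2 * ‖y‖ ^ 2) (l ^ 2 • Q) x :=
      (hQ.const_mul (l ^ 2)).const_add 1
    have huinv : HasFDerivAt (fun y : E2 => (1 + l ^ 2 * ‖y‖ ^ 2)⁻¹)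
        ((-((1 + l ^ 2 * ‖x‖ ^ 2) ^ 2)⁻¹) • (l ^ 2 • Q)) x :=
      (hasDerivAt_inv hux).comp_hasFDerivAt x hu
    have ht : HasFDerivAt (fun y : E2 => l * ‖y‖ ^ 2) (l • Q) x := hQ.const_mul l
    have htinv : HasFDerivAt (fun y : E2 => (l * ‖y‖ ^ 2)⁻¹)
        ((-((l * ‖x‖ ^ 2) ^ 2)⁻¹) • (l • Q)) x :=
      (hasDerivAt_inv htx).comp_hasFDerivAt x ht
    have hf0 := (hP0.const_mul (2 * l)).mul huinv
    have hf1 := (hP1.const_mul (2 * l)).mul huinv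
    have hf2 := ((hQ.const_mul (l ^ 2)).sub_const 1).mul huinv
    have hg0 := (hP0.const_mul 2).mul htinv
    have hg1 := (hP1.const_mul 2).mul htinv
    set F0 : E2 →L[ℝ] ℝ := (2 * l * x 0) • -((1 + l ^ 2 * ‖x‖ ^ 2) ^ 2)⁻¹ • l ^ 2 • Q +
      (1 + l ^ 2 * ‖x‖ ^ 2)⁻¹ • (2 * l) • P0 with hF0def
    set F1 : E2 →L[ℝ] ℝ := (2 * l * x 1) • -((1 + l ^ 2 * ‖x‖ ^ 2) ^ 2)⁻¹ • l ^ 2 • Q +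
      (1 + l ^ 2 * ‖x‖ ^ 2)⁻¹ • (2 * l) • P1 with hF1def
    set F2 : E2 →L[ℝ] ℝ := (l ^ 2 * ‖x‖ ^ 2 - 1) • -((1 + l ^ 2 * ‖x‖ ^ 2) ^ 2)⁻¹ • l ^ 2 • Q +
      (1 + l ^ 2 * ‖x‖ ^ 2)⁻¹ • l ^ 2 • Q with hF2def
    set G0 : E2 →L[ℝ] ℝ := (2 * x 0) • -((l * ‖x‖ ^ 2) ^ 2)⁻¹ • l • Q +
      (l * ‖x‖ ^ 2)⁻¹ • (2:ℝ) • P0 with hG0def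
    set G1 : E2 →L[ℝ] ℝ := (2 * x 1) • -((l * ‖x‖ ^ 2) ^ 2)⁻¹ • l • Q +
      (l * ‖x‖ ^ 2)⁻¹ • (2:ℝ) • P1 with hG1def
    set e3 : (Fin 3 → ℝ) →L[ℝ] E3 :=
      ((PiLp.continuousLinearEquiv 2 ℝ (fun _ : Fin 3 => ℝ)).symm :
        (Fin 3 → ℝ) →L[ℝ] E3) with he3def
    have hFf : HasFDerivAt (fun y (i : Fin 3) =>
        ![(fun y : E2 => 2 * l * y 0 * (1 + l ^ 2 * ‖y‖ ^ 2)⁻¹),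
          (fun y : E2 => 2 * l * y 1 * (1 + l ^ 2 * ‖y‖ ^ 2)⁻¹),
          (fun y : E2 => (l ^ 2 * ‖y‖ ^ 2 - 1) * (1 + l ^ 2 * ‖y‖ ^ 2)⁻¹)] i y)
        (ContinuousLinearMap.pi ![F0, F1, F2]) x := by
      apply hasFDerivAt_pi.mpr
      intro i
      fin_cases i
      · exact hf0
      · exact hf1
      · exact hf2
    have hGf : HasFDerivAt (fun y (i : Fin 3) =>
        ![(fun y : E2 => 2 * y 0 * (l * ‖y‖ ^ 2)⁻¹),
          (fun y : E2 => 2 * y 1 * (l * ‖y‖ ^ 2)⁻¹),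
          (fun _ : E2 => (0:ℝ))] i y)
        (ContinuousLinearMap.pi ![G0, G1, 0]) x := by
      apply hasFDerivAt_pi.mpr
      intro i
      fin_cases i
      · exact hg0
      · exact hg1
      · exact hasFDerivAt_const 0 x
    have hF : HasFDerivAt (fun y : E2 => stereo (l • y))
        (e3.comp (ContinuousLinearMap.pi ![F0, F1, F2])) x := by
      have hfeq : (fun y : E2 => stereo (l • y)) = fun y => e3 (fun i =>
          ![(fun y : E2 => 2 * l * y 0 * (1 + l ^ 2 * ‖y‖ ^ 2)⁻¹),
            (fun y : E2 => 2 * l * y 1 * (1 + l ^ 2 * ‖y‖ ^ 2)⁻¹),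
            (fun y : E2 => (l ^ 2 * ‖y‖ ^ 2 - 1) * (1 + l ^ 2 * ‖y‖ ^ 2)⁻¹)] i y) := by
        funext y
        ext i
        fin_cases i <;>
          simp [stereo, he3def, norm_smul, mul_pow, sq_abs, div_eq_mul_inv] <;>
          exact Or.inl (by ring)
      rw [hfeq]
      exact e3.hasFDerivAt.comp x hFf
    have hG : HasFDerivAt (tail l) (e3.comp (ContinuousLinearMap.pi ![G0, G1, 0])) x := by
      have hgeq : tail l = fun y => e3 (fun i =>
          ![(fun y : E2 => 2 * y 0 * (l * ‖y‖ ^ 2)⁻¹),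
            (fun y : E2 => 2 * y 1 * (l * ‖y‖ ^ 2)⁻¹),
            (fun _ : E2 => (0:ℝ))] i y) := by
        funext y
        ext i
        fin_cases i <;>
          simp [tail, he3def, div_eq_mul_inv] <;>
          exact Or.inl (by ring)
      rw [hgeq]
      exact e3.hasFDerivAt.comp x hGf
    rw [hF.fderiv, hG.fderiv]
    apply ContinuousLinearMap.opNorm_le_bound _ (by positivity)
    intro v
    set L := e3.comp (ContinuousLinearMap.pi ![F0, F1, F2]) -
      e3.comp (ContinuousLinearMap.pi ![G0, G1, 0]) with hLdef
    have hb : |(inner ℝ x v : ℝ)| ≤ ‖x‖ * ‖v‖ := abs_real_inner_le_norm x v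
    have ha0 : |v 0| ≤ ‖v‖ := coord_le_norm v 0
    have ha1 : |v 1| ≤ ‖v‖ := coord_le_norm v 1
    have hQv : Q v = 2 * (inner ℝ x v : ℝ) := by
      simp [hQdef, two_smul]
      ring
    have c0 : L v 0 = (-2) * v 0 / (l * ‖x‖ ^ 2 * (1 + l ^ 2 * ‖x‖ ^ 2)) +
        4 * x 0 * (inner ℝ x v : ℝ) * (1 + 2 * l ^ 2 * ‖x‖ ^ 2) /
          (l * ‖x‖ ^ 4 * (1 + l ^ 2 * ‖x‖ ^ 2) ^ 2) := by
      simp [hLdef, hF0def, hG0def, he3def, hQv, hP0def]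
      field_simp
      ring
    have c1 : L v 1 = (-2) * v 1 / (l * ‖x‖ ^ 2 * (1 + l ^ 2 * ‖x‖ ^ 2)) +
        4 * x 1 * (inner ℝ x v : ℝ) * (1 + 2 * l ^ 2 * ‖x‖ ^ 2) /
          (l * ‖x‖ ^ 4 * (1 + l ^ 2 * ‖x‖ ^ 2) ^ 2) := by
      simp [hLdef, hF1def, hG1def, he3def, hQv, hP1def]
      field_simp
      ring
    have c2 : L v 2 = 4 * l ^ 2 * (inner ℝ x v : ℝ) / (1 + l ^ 2 * ‖x‖ ^ 2) ^ 2 := by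
      simp [hLdef, hF2def, he3def, hQv]
      field_simp
      ring
    calc ‖L v‖ ≤ |L v 0| + |L v 1| + |L v 2| := e3_norm_le _
      _ ≤ 10 / c ^ 4 / l ^ 2 * ‖v‖ + 10 / c ^ 4 / l ^ 2 * ‖v‖ + 4 / c ^ 3 / l ^ 2 * ‖v‖ := by
          rw [c0, c1, c2]
          gcongr ?_ + ?_ + ?_
          · exact aux0 c l ‖x‖ (x 0) (v 0) (inner ℝ x v) ‖v‖ hc hl hx (coord_le_norm x 0) ha0 hb
              (norm_nonneg v)
          · exact aux0 c l ‖x‖ (x 1) (v 1) (inner ℝ x v) ‖v‖ hc hl hx (coord_le_norm x 1) ha1 hb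
              (norm_nonneg v)
          · exact aux2 c l ‖x‖ (inner ℝ x v) ‖v‖ hc hl hx hb (norm_nonneg v)
      _ = (10 / c ^ 4 / l ^ 2 + 10 / c ^ 4 / l ^ 2 + 4 / c ^ 3 / l ^ 2) * ‖v‖ := by ring
      _ ≤ (30 / c ^ 4 + 30 / c ^ 3 + 30 / c ^ 2) / l ^ 2 * ‖v‖ := by
          gcongr ?_ * ‖v‖
          have h4 : 10 / c ^ 4 / l ^ 2 + 10 / c ^ 4 / l ^ 2 + 4 / c ^ 3 / l ^ 2 =
              (20 / c ^ 4 + 4 / c ^ 3) / l ^ 2 := by ring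
          rw [h4]
          gcongr ?_ / l ^ 2
          have e1 : (20:ℝ) / c ^ 4 ≤ 30 / c ^ 4 := by gcongr; norm_num
          have e2 : (4:ℝ) / c ^ 3 ≤ 30 / c ^ 3 := by gcongr; norm_num
          have e3' : (0:ℝ) ≤ 30 / c ^ 2 := by positivity
          linarith
end
end

section
/- For every r > 0 there exists a constant C > 0 such that for all λ ≥ max(1, 2/r): |∫_{𝔻_r} Σ_{i=1,2} x_i · ∂_λ( 16λ³ x_i /(1+λ²|x|²)³ ) dx + 8π λ⁻²| ≤ C λ⁻³; that is, the truncated integral of x against the λ-derivative of −Δπ̄_λ equals 8π λ⁻² up to an error of order λ⁻³. -/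
open MeasureTheory Real
noncomputable section
lemma aux_deriv (l : ℝ) (c s : ℝ) (hs : 0 ≤ s) :
    deriv (fun t : ℝ => 16 * t ^ 3 * c / (1 + t ^ 2 * s) ^ 3) l
      = c * (48 * l ^ 2 * (1 - l ^ 2 * s) / (1 + l ^ 2 * s) ^ 4) := by
  have hden : (0:ℝ) < 1 + l ^ 2 * s := by positivity
  have h1 : HasDerivAt (fun t : ℝ => 16 * t ^ 3 * c) (48 * l ^ 2 * c) l := by
    have := (hasDerivAt_pow 3 l).const_mul (16 : ℝ)
    have := this.mul_const c
    refine this.congr_deriv ?_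
    ring
  have h2 : HasDerivAt (fun t : ℝ => (1 + t ^ 2 * s) ^ 3)
      (3 * (1 + l ^ 2 * s) ^ 2 * (2 * l * s)) l := by
    have hb : HasDerivAt (fun t : ℝ => 1 + t ^ 2 * s) (2 * l * s) l := by
      have := ((hasDerivAt_pow 2 l).mul_const s).const_add (1 : ℝ)
      refine this.congr_deriv ?_
      ring
    exact (hb.pow 3).congr_deriv (by ring)
  have h := h1.div h2 (by positivity)
  rw [show (fun t : ℝ => 16 * t ^ 3 * c / (1 + t ^ 2 * s) ^ 3) = (fun t => 16 * t ^ 3 * c) / (fun t => (1 + t ^ 2 * s) ^ 3) from rfl, h.deriv]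
  field_simp
  ring

lemma aux_sum (l : ℝ) (x : E2) :
    (∑ i : Fin 2, x i * deriv (fun t : ℝ => 16 * t ^ 3 * x i / (1 + t ^ 2 * ‖x‖ ^ 2) ^ 3) l)
      = 48 * l ^ 2 * ‖x‖ ^ 2 * (1 - l ^ 2 * ‖x‖ ^ 2) / (1 + l ^ 2 * ‖x‖ ^ 2) ^ 4 := by
  have hs : (0:ℝ) ≤ ‖x‖ ^ 2 := by positivity
  have hx2 : ∑ i : Fin 2, x i ^ 2 = ‖x‖ ^ 2 := by
    rw [EuclideanSpace.norm_eq]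
    rw [Real.sq_sqrt (by positivity)]
    simp [sq_abs]
  calc (∑ i : Fin 2, x i * deriv (fun t : ℝ => 16 * t ^ 3 * x i / (1 + t ^ 2 * ‖x‖ ^ 2) ^ 3) l)
      = ∑ i : Fin 2, x i ^ 2 * (48 * l ^ 2 * (1 - l ^ 2 * ‖x‖ ^ 2) / (1 + l ^ 2 * ‖x‖ ^ 2) ^ 4) := by
        refine Finset.sum_congr rfl fun i _ => ?_
        rw [aux_deriv l (x i) (‖x‖ ^ 2) hs]; ring
    _ = _ := by rw [← Finset.sum_mul, hx2]; ring


lemma vol_unit_ball : (volume (Metric.ball (0:E2) 1)).toReal = π := by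
  rw [EuclideanSpace.volume_ball (Fin 2)]
  have : Real.Gamma ((Fintype.card (Fin 2) : ℝ) / 2 + 1) = 1 := by
    norm_num
  rw [this]
  simp [Real.sq_sqrt Real.pi_nonneg, ENNReal.toReal_ofReal Real.pi_nonneg,
    ← ENNReal.ofReal_pow, Real.sq_sqrt Real.pi_nonneg]

lemma hasderiv_H (l : ℝ) (hl : 0 < l) (ρ : ℝ) :
    HasDerivAt (fun p : ℝ => 4*(1+3*l^2*p^2+6*l^4*p^4)/(l^2*(1+l^2*p^2)^3))
      (ρ * (48*l^2*ρ^2*(1-l^2*ρ^2)/(1+l^2*ρ^2)^4)) ρ := by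
  have hden : (0:ℝ) < 1 + l^2*ρ^2 := by positivity
  have hN : HasDerivAt (fun p : ℝ => 4*(1+3*l^2*p^2+6*l^4*p^4))
      (4*((3*l^2)*(2*ρ^1)+(6*l^4)*(4*ρ^3))) ρ := by
    exact ((((hasDerivAt_pow 2 ρ).const_mul (3*l^2)).const_add 1).add
      ((hasDerivAt_pow 4 ρ).const_mul (6*l^4))).const_mul 4
  have hb : HasDerivAt (fun p : ℝ => 1 + l^2*p^2) ((l^2)*(2*ρ^1)) ρ :=
    ((hasDerivAt_pow 2 ρ).const_mul (l^2)).const_add 1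
  have hD : HasDerivAt (fun p : ℝ => l^2*(1+l^2*p^2)^3)
      (l^2*(3*(1+l^2*ρ^2)^2*((l^2)*(2*ρ^1)))) ρ := by
    have := hb.pow 3
    have := this.const_mul (l^2)
    exact this.congr_deriv (by ring)
  have h := hN.div hD (by positivity)
  refine h.congr_deriv ?_
  field_simp
  ring

lemma radial (r l : ℝ) (hr : 0 < r) (hl : 0 < l) :
    (∫ x in Metric.ball (0:E2) r, 48*l^2*‖x‖^2*(1-l^2*‖x‖^2)/(1+l^2*‖x‖^2)^4)
      = 2*π*(4*(1+3*l^2*r^2+6*l^4*r^4)/(l^2*(1+l^2*r^2)^3)) - 8*π/l^2 := by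
  set g : ℝ → ℝ := fun ρ => 48*l^2*ρ^2*(1-l^2*ρ^2)/(1+l^2*ρ^2)^4 with hg
  have h1 : (∫ x in Metric.ball (0:E2) r, g ‖x‖)
      = ∫ x : E2, Set.indicator (Set.Iio r) g ‖x‖ := by
    rw [← integral_indicator measurableSet_ball]
    refine integral_congr_ae (Filter.Eventually.of_forall fun x => ?_)
    by_cases hx : x ∈ Metric.ball (0:E2) r
    · rw [Set.indicator_of_mem hx]
      exact (Set.indicator_of_mem (by simpa [Set.mem_Iio, mem_ball_zero_iff] using hx) g).symm
    · rw [Set.indicator_of_notMem hx]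
      exact (Set.indicator_of_notMem (by simpa [Set.mem_Iio, mem_ball_zero_iff] using hx) g).symm
  have h2 := integral_fun_norm_addHaar (volume : Measure E2) (Set.indicator (Set.Iio r) g)
  rw [finrank_euclideanSpace_fin] at h2
  have h3 : (∫ y in Set.Ioi (0:ℝ), y ^ (2-1 : ℕ) • Set.indicator (Set.Iio r) g y)
      = ∫ ρ in (0:ℝ)..r, ρ * g ρ := by
    have he : ∀ y : ℝ, y ^ (2-1 : ℕ) • Set.indicator (Set.Iio r) g y
        = Set.indicator (Set.Iio r) (fun ρ => ρ * g ρ) y := by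
      intro y
      by_cases hy : y ∈ Set.Iio r <;> simp [Set.indicator_of_mem, Set.indicator_of_notMem, hy]
    simp_rw [he]
    rw [integral_indicator measurableSet_Iio, Measure.restrict_restrict measurableSet_Iio,
      Set.Iio_inter_Ioi, ← integral_Ioc_eq_integral_Ioo,
      ← intervalIntegral.integral_of_le hr.le]
  have hc : Continuous fun ρ : ℝ => ρ * g ρ := by
    apply continuous_id.mul
    exact Continuous.div (by fun_prop) (by fun_prop) (fun x => by positivity)
  have h4 : (∫ ρ in (0:ℝ)..r, ρ * g ρ)
      = 4*(1+3*l^2*r^2+6*l^4*r^4)/(l^2*(1+l^2*r^2)^3)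
        - 4*(1+3*l^2*0^2+6*l^4*0^4)/(l^2*(1+l^2*0^2)^3) := by
    exact intervalIntegral.integral_eq_sub_of_hasDerivAt (fun ρ _ => hasderiv_H l hl ρ)
      (hc.intervalIntegrable 0 r)
  have : (∫ x in Metric.ball (0:E2) r, g ‖x‖)
      = 2*π*(4*(1+3*l^2*r^2+6*l^4*r^4)/(l^2*(1+l^2*r^2)^3)) - 8*π/l^2 := by
    rw [h1, h2, h3, h4, measureReal_def, vol_unit_ball]
    simp only [nsmul_eq_mul, smul_eq_mul, Nat.cast_ofNat]
    have hl' : l ≠ 0 := ne_of_gt hl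
    field_simp
    ring
  simpa [hg] using this


/-- For every `r > 0` there is `C > 0` so that for all `λ ≥ max(1, 2/r)`:
`|∫_{𝔻_r} Σᵢ xᵢ ∂_λ(16λ³xᵢ/(1+λ²|x|²)³) dx + 8πλ⁻²| ≤ Cλ⁻³`; i.e. the truncated integral of
`x` against the `λ`-derivative of `−Δπ̄_λ` equals `8πλ⁻²` up to an error of order `λ⁻³`. -/
theorem stmt8 :
    ∀ r : ℝ, 0 < r → ∃ C : ℝ, 0 < C ∧ ∀ l : ℝ, max 1 (2 / r) ≤ l →
      |(∫ x in Metric.ball (0 : E2) r,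
          ∑ i : Fin 2, x i * deriv (fun t : ℝ => 16 * t ^ 3 * x i / (1 + t ^ 2 * ‖x‖ ^ 2) ^ 3) l)
        + 8 * π / l ^ 2| ≤ C / l ^ 3 := by
  intro r hr
  refine ⟨80 * π / r ^ 2, by positivity, fun l hl => ?_⟩
  have hl1 : (1:ℝ) ≤ l := le_trans (le_max_left _ _) hl
  have hl0 : 0 < l := lt_of_lt_of_le one_pos hl1
  have hlr : 2 ≤ l * r := by
    have h2r : 2 / r ≤ l := le_trans (le_max_right _ _) hl
    calc (2:ℝ) = (2 / r) * r := by field_simp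
    _ ≤ l * r := by gcongr
  have hint : (∫ x in Metric.ball (0 : E2) r,
      ∑ i : Fin 2, x i * deriv (fun t : ℝ => 16 * t ^ 3 * x i / (1 + t ^ 2 * ‖x‖ ^ 2) ^ 3) l)
      = 2*π*(4*(1+3*l^2*r^2+6*l^4*r^4)/(l^2*(1+l^2*r^2)^3)) - 8*π/l^2 := by
    rw [← radial r l hr hl0]
    exact setIntegral_congr_fun measurableSet_ball fun x _ => aux_sum l x
  rw [hint]
  have key : 2*π*(4*(1+3*l^2*r^2+6*l^4*r^4)/(l^2*(1+l^2*r^2)^3)) - 8*π/l^2 + 8*π/l^2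
      = 2*π*(4*(1+3*l^2*r^2+6*l^4*r^4)/(l^2*(1+l^2*r^2)^3)) := by ring
  rw [key]
  have hpos : (0:ℝ) ≤ 2*π*(4*(1+3*l^2*r^2+6*l^4*r^4)/(l^2*(1+l^2*r^2)^3)) := by positivity
  rw [abs_of_nonneg hpos]
  have hu : (4:ℝ) ≤ l^2 * r^2 := by nlinarith
  have step1 : 2*π*(4*(1+3*l^2*r^2+6*l^4*r^4)/(l^2*(1+l^2*r^2)^3)) ≤ 80*π/(r^2*l^4) := by
    rw [show 2*π*(4*(1+3*l^2*r^2+6*l^4*r^4)/(l^2*(1+l^2*r^2)^3))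
        = (8*π*(1+3*l^2*r^2+6*l^4*r^4))/(l^2*(1+l^2*r^2)^3) by ring]
    rw [div_le_div_iff₀ (by positivity) (by positivity)]
    have hu0 : (0:ℝ) ≤ l^2*r^2 := mul_nonneg (sq_nonneg l) (sq_nonneg r)
    have core : (1+3*(l^2*r^2)+6*(l^2*r^2)^2)*(l^2*r^2) ≤ 10*(1+l^2*r^2)^3 := by
      nlinarith [sq_nonneg (l^2*r^2), hu0]
    nlinarith [mul_le_mul_of_nonneg_left core (by positivity : (0:ℝ) ≤ 8*π*l^2)]
  refine le_trans step1 ?_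
  rw [div_div]
  apply div_le_div_of_nonneg_left (by positivity) (by positivity)
  have h34 : l^3 ≤ l^4 := by
    nlinarith [mul_nonneg (pow_nonneg hl0.le 3) (sub_nonneg.mpr hl1)]
  exact mul_le_mul_of_nonneg_left h34 (sq_nonneg r)
end
end

section
/- Let γ ∈ (1,2), C₀ > 0, T ≥ 0, and let E : [T,∞) → ℝ be differentiable and nonincreasing with 0 < E(t) for all t, E(T) ≤ exp(−γ/(2−γ)), and E′(t) ≤ −C₀⁻¹ E(t)^{2/γ}/|log E(t)| for all t ≥ T. Then there exist constants C > 0 and T₁ ≥ max(T,3) (depending on γ, C₀, T and E(T)) such that E(t) ≤ C t^{−γ/(2−γ)} (log t)^{γ/(2−γ)} for all t ≥ T₁. -/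
open Real

lemma aux_rpow_neg_anti {x y p : ℝ} (hx : 0 < x) (hxy : x ≤ y) (hp : 0 ≤ p) :
    y ^ (-p) ≤ x ^ (-p) := by
  rw [Real.rpow_neg hx.le, Real.rpow_neg (hx.trans_le hxy).le]
  exact inv_anti₀ (Real.rpow_pos_of_pos hx p) (Real.rpow_le_rpow hx.le hxy hp)

set_option maxHeartbeats 1000000 in
/-- If `γ ∈ (1,2)`, `C₀ > 0`, `T ≥ 0` and `E : [T,∞) → ℝ` is differentiable, nonincreasing
and positive with `E(T) ≤ exp(−γ/(2−γ))` and `E′(t) ≤ −C₀⁻¹E(t)^{2/γ}/|log E(t)|`, then there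
are `C > 0` and `T₁ ≥ max(T,3)` with `E(t) ≤ C t^{−γ/(2−γ)}(log t)^{γ/(2−γ)}` for `t ≥ T₁`. -/
theorem stmt13 :
    ∀ γ : ℝ, 1 < γ → γ < 2 → ∀ C₀ : ℝ, 0 < C₀ → ∀ T : ℝ, 0 ≤ T → ∀ E : ℝ → ℝ,
      (∀ t, T ≤ t → DifferentiableAt ℝ E t) →
      (∀ s t, T ≤ s → s ≤ t → E t ≤ E s) →
      (∀ t, T ≤ t → 0 < E t) →
      E T ≤ Real.exp (-(γ / (2 - γ))) →
      (∀ t, T ≤ t → deriv E t ≤ -C₀⁻¹ * (Real.rpow (E t) (2 / γ) / |Real.log (E t)|)) →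
      ∃ C : ℝ, 0 < C ∧ ∃ T₁ : ℝ, max T 3 ≤ T₁ ∧
        ∀ t, T₁ ≤ t →
          E t ≤ C * Real.rpow t (-(γ / (2 - γ))) * Real.rpow (Real.log t) (γ / (2 - γ)) := by
  intro γ hγ1 hγ2 C₀ hC₀ T hT E hdiff hmono hpos hET hderiv
  simp only [Real.rpow_eq_pow] at hderiv ⊢
  have h2γ : (0:ℝ) < 2 - γ := by linarith
  have hγ0 : (0:ℝ) < γ := by linarith
  set β : ℝ := (2 - γ) / γ with hβdef
  set α : ℝ := γ / (2 - γ) with hαdef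
  have hβpos : 0 < β := div_pos h2γ hγ0
  have hαpos : 0 < α := div_pos hγ0 h2γ
  have hαβ : α * β = 1 := by rw [hαdef, hβdef]; field_simp
  set c : ℝ := β ^ 2 * C₀⁻¹ with hcdef
  have hc : 0 < c := by positivity
  have hlogE : ∀ t, T ≤ t → Real.log (E t) ≤ -α := by
    intro t ht
    have h1 : E t ≤ Real.exp (-α) := le_trans (hmono T t le_rfl ht) hET
    calc Real.log (E t) ≤ Real.log (Real.exp (-α)) := Real.log_le_log (hpos t ht) h1
      _ = -α := Real.log_exp _
  have hlogneg : ∀ t, T ≤ t → Real.log (E t) < 0 := fun t ht =>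
    lt_of_le_of_lt (hlogE t ht) (by linarith)
  set G : ℝ → ℝ := fun t => (-β * Real.log (E t) - 1) * (E t) ^ (-β) - c * t with hGdef
  -- derivative computation
  have key : ∀ t, T ≤ t →
      HasDerivAt G (β ^ 2 * deriv E t * (E t) ^ (-β - 1) * Real.log (E t) - c) t ∧
      0 ≤ β ^ 2 * deriv E t * (E t) ^ (-β - 1) * Real.log (E t) - c := by
    intro t ht
    have hx : 0 < E t := hpos t ht
    have hxne : E t ≠ 0 := ne_of_gt hx
    have hE : HasDerivAt E (deriv E t) t := (hdiff t ht).hasDerivAt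
    constructor
    · have h1 : HasDerivAt (fun s => Real.log (E s)) (deriv E t / E t) t := hE.log hxne
      have h2 : HasDerivAt (fun s => (E s) ^ (-β))
          (deriv E t * (-β) * (E t) ^ (-β - 1)) t := hE.rpow_const (Or.inl hxne)
      have h3 : HasDerivAt (fun s => -β * Real.log (E s) - 1)
          (-β * (deriv E t / E t)) t := (h1.const_mul (-β)).sub_const 1
      have h4 := h3.mul h2
      have h5 := h4.sub ((hasDerivAt_id t).const_mul c)
      refine h5.congr_deriv ?_
      have hxsplit : (E t) ^ (-β) = (E t) ^ (-β - 1) * E t := by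
        rw [← Real.rpow_add_one hxne]; ring_nf
      rw [hxsplit]
      field_simp
      ring
    · have hlx : Real.log (E t) < 0 := hlogneg t ht
      have hd := hderiv t ht
      rw [abs_of_neg hlx] at hd
      have hK : β ^ 2 * (E t) ^ (-β - 1) * Real.log (E t) ≤ 0 := by
        have h0 := Real.rpow_pos_of_pos hx (-β - 1)
        nlinarith [mul_pos (mul_pos (pow_pos hβpos 2) h0) (neg_pos.2 hlx)]
      have hmul := mul_le_mul_of_nonpos_right hd hK
      have hxx : (E t) ^ ((2:ℝ) / γ) * (E t) ^ (-β - 1) = 1 := by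
        rw [← Real.rpow_add hx]
        rw [show 2 / γ + (-β - 1) = 0 by rw [hβdef]; field_simp; ring]
        exact Real.rpow_zero _
      have hl : Real.log (E t) ≠ 0 := ne_of_lt hlx
      have hBK : (-C₀⁻¹ * ((E t) ^ ((2:ℝ) / γ) / -Real.log (E t))) *
          (β ^ 2 * (E t) ^ (-β - 1) * Real.log (E t)) = c := by
        calc (-C₀⁻¹ * ((E t) ^ ((2:ℝ) / γ) / -Real.log (E t))) *
            (β ^ 2 * (E t) ^ (-β - 1) * Real.log (E t))
            = (C₀⁻¹ * β ^ 2) * ((E t) ^ ((2:ℝ) / γ) * (E t) ^ (-β - 1)) *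
              (Real.log (E t) / Real.log (E t)) := by ring
          _ = c := by rw [div_self hl, hxx, hcdef]; ring
      have hdK : deriv E t * (β ^ 2 * (E t) ^ (-β - 1) * Real.log (E t)) =
          β ^ 2 * deriv E t * (E t) ^ (-β - 1) * Real.log (E t) := by ring
      rw [hBK, hdK] at hmul
      linarith
  have hgmono : MonotoneOn G (Set.Ici T) := by
    apply monotoneOn_of_deriv_nonneg (convex_Ici T)
    · exact fun t ht => ((key t ht).1.differentiableAt.continuousAt).continuousWithinAt
    · rw [interior_Ici]
      exact fun t ht => ((key t (le_of_lt ht)).1.differentiableAt).differentiableWithinAt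
    · rw [interior_Ici]
      intro t ht
      rw [(key t (le_of_lt ht)).1.deriv]
      exact (key t (le_of_lt ht)).2
  have hGT : 0 ≤ (-β * Real.log (E T) - 1) * (E T) ^ (-β) := by
    apply mul_nonneg
    · have h := hlogE T le_rfl
      nlinarith [hαβ, hβpos]
    · exact (Real.rpow_pos_of_pos (hpos T le_rfl) _).le
  have hGlb : ∀ t, T ≤ t → c * (t - T) ≤ (-β * Real.log (E t) - 1) * (E t) ^ (-β) := by
    intro t ht
    have h := hgmono Set.self_mem_Ici ht ht
    simp only [hGdef] at h
    nlinarith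
  refine ⟨(c / 4) ^ (-α), Real.rpow_pos_of_pos (by positivity) _,
    max (max T 3) (max (2 * T) (c / 2)), le_max_left _ _, ?_⟩
  intro t ht
  have htT : T ≤ t := le_trans (le_trans (le_max_left T 3) (le_max_left _ _)) ht
  have ht3 : (3:ℝ) ≤ t := le_trans (le_trans (le_max_right T 3) (le_max_left _ _)) ht
  have ht2T : 2 * T ≤ t := le_trans (le_trans (le_max_left _ _) (le_max_right _ _)) ht
  have htc : c / 2 ≤ t := le_trans (le_trans (le_max_right _ _) (le_max_right _ _)) ht
  have htpos : (0:ℝ) < t := by linarith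
  have hL1 : 1 ≤ Real.log t := by
    have he3 : Real.exp 1 ≤ 3 := by
      have := Real.exp_one_lt_d9; linarith
    calc (1:ℝ) = Real.log (Real.exp 1) := (Real.log_exp 1).symm
      _ ≤ Real.log t := Real.log_le_log (Real.exp_pos 1) (by linarith)
  have hLpos : 0 < Real.log t := by linarith
  set L := Real.log t with hLdef
  have hx : 0 < E t := hpos t htT
  set y : ℝ := (E t) ^ (-β) with hydef
  have hypos : 0 < y := Real.rpow_pos_of_pos hx _
  have hlogy : Real.log y = -β * Real.log (E t) := Real.log_rpow hx _
  have hlogy1 : 1 ≤ Real.log y := by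
    have h := hlogE t htT
    rw [hlogy]
    nlinarith [hαβ, hβpos]
  have hmain : c * (t - T) ≤ y * Real.log y - y := by
    have h := hGlb t htT
    rw [hlogy]
    nlinarith
  -- the key lower bound on y
  have hclaim : c * t / (4 * L) ≤ y := by
    by_contra hcon
    push_neg at hcon
    set A : ℝ := c * (t - T) / (2 * L) with hAdef
    have htT2 : t / 2 ≤ t - T := by linarith
    have htTpos : (0:ℝ) < t - T := by linarith
    have hApos : 0 < A := by positivity
    have hAle : c * t / (4 * L) ≤ A := by
      rw [hAdef, div_le_div_iff₀ (by positivity) (by positivity)]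
      nlinarith [mul_le_mul_of_nonneg_left htT2 (mul_pos hc hLpos).le]
    have hyA : y < A := lt_of_lt_of_le hcon hAle
    have hAt2 : A ≤ t ^ 2 := by
      rw [hAdef, div_le_iff₀ (by positivity)]
      nlinarith
    have hlogyA : Real.log y ≤ 2 * L := by
      calc Real.log y ≤ Real.log A := Real.log_le_log hypos hyA.le
        _ ≤ Real.log (t ^ 2) := Real.log_le_log hApos hAt2
        _ = 2 * L := by rw [Real.log_pow]; push_cast; ring
    have hfinal : y * Real.log y ≤ A * (2 * L) := by
      apply mul_le_mul hyA.le hlogyA (by linarith) hApos.le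
    have hA2L : A * (2 * L) = c * (t - T) := by
      rw [hAdef]; field_simp
    nlinarith
  -- conclude
  have hxy : E t = y ^ (-α) := by
    rw [hydef, ← Real.rpow_mul hx.le, show (-β) * (-α) = 1 by nlinarith [hαβ],
      Real.rpow_one]
  have hle : E t ≤ (c * t / (4 * L)) ^ (-α) := by
    rw [hxy]
    exact aux_rpow_neg_anti (by positivity) hclaim hαpos.le
  have heq : (c * t / (4 * L)) ^ (-α) = (c / 4) ^ (-α) * (t ^ (-α) * L ^ α) := by
    rw [show c * t / (4 * L) = (c / 4) * (t / L) by ring]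
    rw [Real.mul_rpow (by positivity) (by positivity)]
    rw [Real.div_rpow htpos.le hLpos.le]
    have h9 : t ^ (-α) / L ^ (-α) = t ^ (-α) * L ^ α := by
      rw [Real.rpow_neg hLpos.le α]
      rw [div_eq_mul_inv, inv_inv]
    rw [h9]
  calc E t ≤ (c * t / (4 * L)) ^ (-α) := hle
    _ = (c / 4) ^ (-α) * t ^ (-α) * L ^ α := by rw [heq]; ring
end

section
/- Let β ∈ (0,1), T ∈ ℝ, and let E : [T,∞) → ℝ be continuously differentiable with E(t) > 0, E′(t) ≤ 0, and E(t)^{β−1}·(−E′(t))^{1/2} ≥ 1 for all t ≥ T. Then for all T ≤ t ≤ t̃ one has ∫_t^{t̃} (−E′(s))^{1/2} ds ≤ β⁻¹ ( E(t)^β − E(t̃)^β ) ≤ β⁻¹ E(t)^β. -/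
open Real MeasureTheory

/-- If `β ∈ (0,1)` and `E : [T,∞) → ℝ` is continuously differentiable with `E > 0`, `E′ ≤ 0`
and `E^{β−1}(−E′)^{1/2} ≥ 1`, then for all `T ≤ t ≤ t̃`:
`∫_t^{t̃} (−E′(s))^{1/2} ds ≤ β⁻¹(E(t)^β − E(t̃)^β) ≤ β⁻¹E(t)^β`. -/
theorem stmt14 :
    ∀ β : ℝ, 0 < β → β < 1 → ∀ T : ℝ, ∀ E E' : ℝ → ℝ,
      ContinuousOn E' (Set.Ici T) →
      (∀ t, T ≤ t → HasDerivAt E (E' t) t) →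
      (∀ t, T ≤ t → 0 < E t) →
      (∀ t, T ≤ t → E' t ≤ 0) →
      (∀ t, T ≤ t → 1 ≤ Real.rpow (E t) (β - 1) * Real.sqrt (-E' t)) →
      ∀ t tt, T ≤ t → t ≤ tt →
        (∫ s in t..tt, Real.sqrt (-E' s)) ≤
            β⁻¹ * (Real.rpow (E t) β - Real.rpow (E tt) β) ∧
          β⁻¹ * (Real.rpow (E t) β - Real.rpow (E tt) β) ≤ β⁻¹ * Real.rpow (E t) β := by
  intro β hβ0 hβ1 T E E' hE'c hEd hEpos hE'le hkey t tt hTt htt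
  have huicc : Set.uIcc t tt = Set.Icc t tt := Set.uIcc_of_le htt
  have hsub : Set.uIcc t tt ⊆ Set.Ici T := by
    rw [huicc]; exact fun x hx => hTt.trans hx.1
  have hEcont : ContinuousOn E (Set.Ici T) := fun x hx =>
    (hEd x hx).continuousAt.continuousWithinAt
  have hgc : ContinuousOn (fun s => E s ^ (β - 1) * (-E' s)) (Set.Ici T) := by
    apply ContinuousOn.mul
    · exact hEcont.rpow_const fun x hx => Or.inl (hEpos x hx).ne'
    · exact hE'c.neg
  have hgint : IntervalIntegrable (fun s => E s ^ (β - 1) * (-E' s)) volume t tt :=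
    (hgc.mono hsub).intervalIntegrable
  have hsint : IntervalIntegrable (fun s => Real.sqrt (-E' s)) volume t tt :=
    ((Real.continuous_sqrt.comp_continuousOn hE'c.neg).mono hsub).intervalIntegrable
  -- FTC
  have hderiv : ∀ s ∈ Set.uIcc t tt,
      HasDerivAt (fun x => -(β⁻¹ * E x ^ β)) (E s ^ (β - 1) * (-E' s)) s := by
    intro s hs
    have hTs : T ≤ s := hsub hs
    have h1 : HasDerivAt (fun x => E x ^ β) (E' s * β * E s ^ (β - 1)) s :=
      (hEd s hTs).rpow_const (Or.inl (hEpos s hTs).ne')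
    have h2 := (h1.const_mul β⁻¹).fun_neg
    refine h2.congr_deriv ?_
    rw [show -(β⁻¹ * (E' s * β * E s ^ (β - 1))) = -(β⁻¹ * β) * (E' s * E s ^ (β - 1)) by ring, inv_mul_cancel₀ hβ0.ne']
    ring
  have hFTC : (∫ s in t..tt, E s ^ (β - 1) * (-E' s)) =
      β⁻¹ * (E t ^ β - E tt ^ β) := by
    rw [intervalIntegral.integral_eq_sub_of_hasDerivAt hderiv hgint]
    ring
  have hmono : (∫ s in t..tt, Real.sqrt (-E' s)) ≤
      ∫ s in t..tt, E s ^ (β - 1) * (-E' s) := by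
    apply intervalIntegral.integral_mono_on htt hsint hgint
    intro s hs
    have hTs : T ≤ s := hTt.trans hs.1
    have hk := hkey s hTs
    have hnn : 0 ≤ -E' s := neg_nonneg.mpr (hE'le s hTs)
    have hsq : Real.sqrt (-E' s) ^ 2 = -E' s := Real.sq_sqrt hnn
    have hsnn : 0 ≤ Real.sqrt (-E' s) := Real.sqrt_nonneg _
    calc Real.sqrt (-E' s) = Real.sqrt (-E' s) * 1 := (mul_one _).symm
      _ ≤ Real.sqrt (-E' s) * (E s ^ (β - 1) * Real.sqrt (-E' s)) := by
          exact mul_le_mul_of_nonneg_left hk hsnn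
      _ = E s ^ (β - 1) * (Real.sqrt (-E' s) * Real.sqrt (-E' s)) := by ring
      _ = E s ^ (β - 1) * (-E' s) := by rw [Real.mul_self_sqrt hnn]
  refine ⟨?_, ?_⟩
  · calc (∫ s in t..tt, Real.sqrt (-E' s)) ≤ _ := hmono
      _ = β⁻¹ * (E t ^ β - E tt ^ β) := hFTC
  · have h0 : (0:ℝ) ≤ E tt ^ β := Real.rpow_nonneg (hEpos tt (hTt.trans htt)).le β
    have : E t ^ β - E tt ^ β ≤ E t ^ β := by linarith
    exact mul_le_mul_of_nonneg_left this (inv_nonneg.mpr hβ0.le)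
end
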